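/- Let x be a real number that has a signed digit representation. Then both x/2 + 1/4 and x/2 - 1/4 have signed digit representations. -/

import Mathlib

/-- A real number has a signed digit representation if it is the sum of a
series of digits in {-1, 0, 1} weighted by powers of 1/2. -/
def HasSDR (x : ℝ) : Prop :=
  ∃ d : ℕ → ℤ, (∀ i, d i = -1 ∨ d i = 0 ∨ d i = 1) ∧
    x = ∑' i : ℕ, (d i : ℝ) / 2 ^ (i + 1)

lemma sdr_summable (d : ℕ → ℤ) (hd : ∀ i, d i = -1 ∨ d i = 0 ∨ d i = 1) :
    Summable (fun i : ℕ => (d i : ℝ) / 2 ^ (i + 1)) := by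
  apply Summable.of_norm_bounded (g := fun i : ℕ => (1/2 : ℝ) ^ i)
    (summable_geometric_of_lt_one (by norm_num) (by norm_num))
  intro i
  have h1 : |(d i : ℝ)| ≤ 1 := by rcases hd i with h | h | h <;> simp [h]
  have : ‖(d i : ℝ) / 2 ^ (i + 1)‖ = |(d i : ℝ)| / 2 ^ (i + 1) := by
    rw [Real.norm_eq_abs, abs_div, abs_pow]; norm_num
  rw [this, div_pow, one_pow]
  calc |(d i : ℝ)| / 2 ^ (i + 1) ≤ 1 / 2 ^ (i + 1) :=
        div_le_div_of_nonneg_right h1 (by positivity) |>.trans_eq rfl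
    _ ≤ 1 / 2 ^ i := by
        apply div_le_div_of_nonneg_left (by norm_num) (by positivity)
        exact pow_le_pow_right₀ (by norm_num) (Nat.le_succ i)

lemma sdr_split (d : ℕ → ℤ) (hd : ∀ i, d i = -1 ∨ d i = 0 ∨ d i = 1) :
    ∑' i : ℕ, (d i : ℝ) / 2 ^ (i + 1)
      = (d 0 : ℝ) / 2 + (d 1 : ℝ) / 4 + ∑' n : ℕ, (d (n + 2) : ℝ) / 2 ^ (n + 3) := by
  have hs := sdr_summable d hd
  have hs1 : Summable (fun n : ℕ => (d (n + 1) : ℝ) / 2 ^ (n + 1 + 1)) := by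
    have := sdr_summable (fun n => d (n + 1)) (fun n => hd (n + 1))
    have h2 : (fun n : ℕ => (d (n + 1) : ℝ) / 2 ^ (n + 1 + 1))
        = fun n : ℕ => ((d (n + 1) : ℝ) / 2 ^ (n + 1)) / 2 := by
      funext n; rw [pow_succ]; ring
    rw [h2]; exact this.div_const 2
  rw [Summable.tsum_eq_zero_add hs, Summable.tsum_eq_zero_add hs1]
  norm_num
  ring

lemma sdr_core (d : ℕ → ℤ) (hd : ∀ i, d i = -1 ∨ d i = 0 ∨ d i = 1)
    (a b : ℤ) (ha : a = -1 ∨ a = 0 ∨ a = 1) (hb : b = -1 ∨ b = 0 ∨ b = 1) :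
    HasSDR ((a : ℝ) / 2 + (b : ℝ) / 4 - (d 0 : ℝ) / 4
      + (∑' i : ℕ, (d i : ℝ) / 2 ^ (i + 1)) / 2) := by
  set X := ∑' i : ℕ, (d i : ℝ) / 2 ^ (i + 1) with hX
  refine ⟨fun n => match n with | 0 => a | 1 => b | n + 2 => d (n + 1), ?_, ?_⟩
  · intro i
    match i with
    | 0 => exact ha
    | 1 => exact hb
    | n + 2 => exact hd (n + 1)
  · rw [sdr_split]
    · show _ = (a : ℝ) / 2 + (b : ℝ) / 4 + ∑' n : ℕ, (d (n + 1) : ℝ) / 2 ^ (n + 3)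
      have hs := sdr_summable d hd
      have h0 : X = (d 0 : ℝ) / 2 ^ (0 + 1) + ∑' n : ℕ, (d (n + 1) : ℝ) / 2 ^ (n + 1 + 1) :=
        Summable.tsum_eq_zero_add hs
      have hT : ∑' n : ℕ, (d (n + 1) : ℝ) / 2 ^ (n + 3)
          = (∑' n : ℕ, (d (n + 1) : ℝ) / 2 ^ (n + 1 + 1)) / 2 := by
        rw [← tsum_div_const]
        congr 1; funext n
        rw [show n + 3 = (n + 1 + 1) + 1 by ring, pow_succ]
        ring
      rw [hT]
      have := h0
      norm_num at this ⊢
      linarith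
    · intro i
      match i with
      | 0 => exact ha
      | 1 => exact hb
      | n + 2 => exact hd (n + 1)

theorem sdr_half_pm_quarter (x : ℝ) (hx : HasSDR x) :
    HasSDR (x / 2 + 1 / 4) ∧ HasSDR (x / 2 - 1 / 4) := by
  obtain ⟨d, hd, hxd⟩ := hx
  subst hxd
  constructor
  · rcases hd 0 with h | h | h
    · have t := sdr_core d hd 0 0 (by norm_num) (by norm_num)
      convert t using 1; rw [h]; push_cast; ring
    · have t := sdr_core d hd 0 1 (by norm_num) (by norm_num)
      convert t using 1; rw [h]; push_cast; ring
    · have t := sdr_core d hd 1 0 (by norm_num) (by norm_num)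
      convert t using 1; rw [h]; push_cast; ring
  · rcases hd 0 with h | h | h
    · have t := sdr_core d hd (-1) 0 (by norm_num) (by norm_num)
      convert t using 1; rw [h]; push_cast; ring
    · have t := sdr_core d hd 0 (-1) (by norm_num) (by norm_num)
      convert t using 1; rw [h]; push_cast; ring
    · have t := sdr_core d hd 0 0 (by norm_num) (by norm_num)
      convert t using 1; rw [h]; push_cast; ring
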